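/- (Time derivative of the squared geodesic distance) Let R : ℝ → ℝ^{3×3} be a curve with R(t) ∈ SO(3) and θ(R(t)) ∈ (0, π) for all t, and suppose R has derivative R' at t₀. Then the function t ↦ (1/2)‖(Log(R(t)))^∨‖₂² is differentiable at t₀ with derivative ⟨(Log(R(t₀)))^∨, (R(t₀)ᵀ R')^∨⟩. -/

import Mathlib

open Matrix Real RealInnerProductSpace

/-- The vee map, inverse of the hat map on skew-symmetric matrices. -/
def vee (S : Matrix (Fin 3) (Fin 3) ℝ) : EuclideanSpace ℝ (Fin 3) :=
  WithLp.toLp 2 ![S 2 1, S 0 2, S 1 0]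

/-- `SO(3)`: real 3×3 matrices `R` with `RᵀR = I` and `det R = 1`. -/
def SO3 (R : Matrix (Fin 3) (Fin 3) ℝ) : Prop :=
  Rᵀ * R = 1 ∧ R.det = 1

/-- The rotation angle `θ(R) = arccos((tr(R) − 1)/2)`. -/
noncomputable def rotAngle (R : Matrix (Fin 3) (Fin 3) ℝ) : ℝ :=
  Real.arccos ((Matrix.trace R - 1) / 2)

/-- The matrix logarithm `Log(R) = (θ/(2 sin θ))(R − Rᵀ)` for `θ ≠ 0`, and `0` for `θ = 0`. -/
noncomputable def matLog (R : Matrix (Fin 3) (Fin 3) ℝ) : Matrix (Fin 3) (Fin 3) ℝ :=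
  if rotAngle R = 0 then 0
  else (rotAngle R / (2 * Real.sin (rotAngle R))) • (R - Rᵀ)

lemma aux_norm_vee_matLog_sq (M : Matrix (Fin 3) (Fin 3) ℝ) (hM : SO3 M)
    (h : rotAngle M ∈ Set.Ioo 0 π) : ‖vee (matLog M)‖ ^ 2 = rotAngle M ^ 2 := by
  obtain ⟨h1, h2⟩ := h
  set θ := rotAngle M with hθdef
  have hθne : θ ≠ 0 := ne_of_gt h1
  set s := Real.sin θ with hsdef
  have hs : 0 < s := Real.sin_pos_of_pos_of_lt_pi h1 h2
  set c : ℝ := (Matrix.trace M - 1) / 2 with hcdef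
  have hlt : c < 1 := by
    by_contra hcon
    push_neg at hcon
    exact hθne (Real.arccos_eq_zero.mpr hcon)
  have hgt : -1 < c := by
    by_contra hcon
    push_neg at hcon
    exact absurd (Real.arccos_eq_pi.mpr hcon) (ne_of_lt h2)
  have hs2 : s ^ 2 = 1 - c ^ 2 := by
    rw [hsdef, hθdef, rotAngle, ← hcdef, Real.sin_arccos, Real.sq_sqrt (by nlinarith)]
  have hadj : Matrix.adjugate M = Mᵀ := by
    have h3 : M * Matrix.adjugate M = 1 := by rw [Matrix.mul_adjugate, hM.2, one_smul]
    calc Matrix.adjugate M = 1 * Matrix.adjugate M := by rw [Matrix.one_mul]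
      _ = (Mᵀ * M) * Matrix.adjugate M := by rw [hM.1]
      _ = Mᵀ * (M * Matrix.adjugate M) := by rw [Matrix.mul_assoc]
      _ = Mᵀ := by rw [h3, Matrix.mul_one]
  rw [Matrix.adjugate_fin_three] at hadj
  have h00 : M 1 1 * M 2 2 - M 1 2 * M 2 1 = M 0 0 := by
    have := congrFun (congrFun hadj 0) 0; simpa using this
  have h11 : M 0 0 * M 2 2 - M 0 2 * M 2 0 = M 1 1 := by
    have := congrFun (congrFun hadj 1) 1; simpa using this
  have h22 : M 0 0 * M 1 1 - M 0 1 * M 1 0 = M 2 2 := by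
    have := congrFun (congrFun hadj 2) 2; simpa using this
  have hcol : ∀ j : Fin 3, M 0 j ^ 2 + M 1 j ^ 2 + M 2 j ^ 2 = 1 := by
    intro j
    have := congrFun (congrFun hM.1 j) j
    simp [Matrix.mul_apply, Fin.sum_univ_three, Matrix.one_apply] at this
    linear_combination this
  have hTdef : Matrix.trace M = M 0 0 + M 1 1 + M 2 2 := Matrix.trace_fin_three M
  have hQ : (M 2 1 - M 1 2) ^ 2 + (M 0 2 - M 2 0) ^ 2 + (M 1 0 - M 0 1) ^ 2 = 4 * s ^ 2 := by
    rw [hs2, hcdef, hTdef]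
    linear_combination hcol 0 + hcol 1 + hcol 2 + 2 * h00 + 2 * h11 + 2 * h22
  have hkey : (θ / (2 * s)) ^ 2 *
      ((M 2 1 - M 1 2) ^ 2 + (M 0 2 - M 2 0) ^ 2 + (M 1 0 - M 0 1) ^ 2) = θ ^ 2 := by
    rw [hQ]; field_simp; ring
  rw [← real_inner_self_eq_norm_sq, matLog, if_neg hθne, ← hθdef, ← hsdef]
  simp only [vee, PiLp.inner_apply, PiLp.toLp_apply, RCLike.inner_apply, conj_trivial, Fin.sum_univ_three,
    Matrix.smul_apply, Matrix.sub_apply, Matrix.transpose_apply, smul_eq_mul,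
    Matrix.cons_val_zero, Matrix.cons_val_one, Matrix.head_cons, Matrix.cons_val_two,
    Matrix.tail_cons]
  linear_combination hkey

/-- (Time derivative of the squared geodesic distance.) If `R : ℝ → ℝ^{3×3}` takes
values in `SO(3)` with `θ(R(t)) ∈ (0, π)` for all `t`, and `R` has (entrywise)
derivative `R'` at `t₀`, then `t ↦ (1/2)‖(Log R(t))^∨‖²` is differentiable at `t₀`
with derivative `⟨(Log R(t₀))^∨, (R(t₀)ᵀ R')^∨⟩`. -/
theorem hasDerivAt_half_sq_geodesic (R : ℝ → Matrix (Fin 3) (Fin 3) ℝ)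
    (hR : ∀ t, SO3 (R t)) (hθ : ∀ t, rotAngle (R t) ∈ Set.Ioo 0 π)
    (t₀ : ℝ) (R' : Matrix (Fin 3) (Fin 3) ℝ)
    (hderiv : ∀ a b, HasDerivAt (fun t => R t a b) (R' a b) t₀) :
    HasDerivAt (fun t => (1 / 2 : ℝ) * ‖vee (matLog (R t))‖ ^ 2)
      ⟪vee (matLog (R t₀)), vee ((R t₀)ᵀ * R')⟫ t₀ := by
  have hfun : (fun t => (1 / 2 : ℝ) * ‖vee (matLog (R t))‖ ^ 2)
      = fun t => (1 / 2 : ℝ) * rotAngle (R t) ^ 2 := by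
    funext t
    rw [aux_norm_vee_matLog_sq (R t) (hR t) (hθ t)]
  -- trace derivative
  have htr : HasDerivAt (fun t => Matrix.trace (R t)) (Matrix.trace R') t₀ := by
    have h := ((hderiv 0 0).add (hderiv 1 1)).add (hderiv 2 2)
    simpa [Matrix.trace, Matrix.diag, Fin.sum_univ_three, Pi.add_def] using h
  -- skew-symmetry of Ω = AᵀR'
  set A := R t₀ with hAdef
  set Ω := Aᵀ * R' with hΩdef
  have hskew : ∀ a b : Fin 3, Ω a b + Ω b a = 0 := by
    intro a b
    have h1 : HasDerivAt (fun t => ∑ k : Fin 3, R t k a * R t k b)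
        (∑ k : Fin 3, (R' k a * R t₀ k b + R t₀ k a * R' k b)) t₀ :=
      HasDerivAt.fun_sum fun k _ => (hderiv k a).mul (hderiv k b)
    have h2 : (fun t => ∑ k : Fin 3, R t k a * R t k b)
        = fun _ => (1 : Matrix (Fin 3) (Fin 3) ℝ) a b := by
      funext t
      have := congrFun (congrFun (hR t).1 a) b
      simpa [Matrix.mul_apply, Matrix.transpose_apply] using this
    rw [h2] at h1
    have h0 := h1.unique (hasDerivAt_const t₀ ((1 : Matrix (Fin 3) (Fin 3) ℝ) a b))
    simp only [hΩdef, Matrix.mul_apply, Matrix.transpose_apply, Fin.sum_univ_three] at h0 ⊢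
    linarith [h0]
  have hθ₀ := hθ t₀
  set θ₀ := rotAngle A with hθ₀def
  have hθne : θ₀ ≠ 0 := ne_of_gt hθ₀.1
  set s := Real.sin θ₀ with hsdef
  have hs : 0 < s := Real.sin_pos_of_pos_of_lt_pi hθ₀.1 hθ₀.2
  set c : ℝ := (Matrix.trace A - 1) / 2 with hcdef
  have hlt : c < 1 := by
    by_contra hcon
    push_neg at hcon
    exact hθne (Real.arccos_eq_zero.mpr hcon)
  have hgt : -1 < c := by
    by_contra hcon
    push_neg at hcon
    exact absurd (Real.arccos_eq_pi.mpr hcon) (ne_of_lt hθ₀.2)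
  have hsqrt : Real.sqrt (1 - c ^ 2) = s := by
    rw [hsdef, hθ₀def, rotAngle, ← hcdef, Real.sin_arccos]
  -- derivative of the angle
  have hcd : HasDerivAt (fun t => (Matrix.trace (R t) - 1) / 2) (Matrix.trace R' / 2) t₀ :=
    (htr.sub_const 1).div_const 2
  have hθd : HasDerivAt (fun t => rotAngle (R t))
      (-(1 / Real.sqrt (1 - c ^ 2)) * (Matrix.trace R' / 2)) t₀ := by
    have := (Real.hasDerivAt_arccos hgt.ne' hlt.ne).comp t₀ hcd
    simpa [rotAngle, Function.comp_def] using this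
  rw [hsqrt] at hθd
  -- value of the inner product
  have hAA : A * Aᵀ = 1 := mul_eq_one_comm.mp (hR t₀).1
  have ht : Matrix.trace (A * Ω) = Matrix.trace R' := by
    rw [hΩdef, ← Matrix.mul_assoc, hAA, Matrix.one_mul]
  have step1 : (A 2 1 - A 1 2) * Ω 2 1 + (A 0 2 - A 2 0) * Ω 0 2 + (A 1 0 - A 0 1) * Ω 1 0
      = - Matrix.trace R' := by
    rw [← ht]
    simp only [Matrix.trace_fin_three, Matrix.mul_apply, Fin.sum_univ_three]
    linear_combination A 2 1 * hskew 2 1 + A 0 2 * hskew 0 2 + A 1 0 * hskew 1 0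
      + (A 0 0 / 2) * hskew 0 0 + (A 1 1 / 2) * hskew 1 1 + (A 2 2 / 2) * hskew 2 2
  have hD : (inner ℝ (vee (matLog A)) (vee Ω) : ℝ)
      = (1 / 2 : ℝ) * (2 * θ₀ ^ 1 * (-(1 / s) * (Matrix.trace R' / 2))) := by
    rw [matLog, if_neg hθne, ← hθ₀def, ← hsdef]
    simp only [vee, PiLp.inner_apply, PiLp.toLp_apply, RCLike.inner_apply, conj_trivial, Fin.sum_univ_three,
      Matrix.smul_apply, Matrix.sub_apply, Matrix.transpose_apply, smul_eq_mul,
      Matrix.cons_val_zero, Matrix.cons_val_one, Matrix.head_cons, Matrix.cons_val_two,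
      Matrix.tail_cons]
    linear_combination (θ₀ / (2 * s)) * step1
  rw [hfun, hD]
  exact (hθd.pow 2).const_mul (1 / 2 : ℝ)
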